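/- Let λ > 0 and let u, x ∈ ℝ^d satisfy, in every coordinate i, u_i = λ·𝕀(u_i x_i ≤ 0)·x_i. Then u = 0. In particular, at any fixed point x* of Lion-K with cautious weight decay, where the update direction stabilizes to u = ∇K(−∇f(x*)), one has ∇K(−∇f(x*)) = 0; if additionally K is a convex function whose unique minimizer of its subgradient-zero condition is 0 (e.g. a norm), this forces ∇f(x*) = 0. -/
import Mathlib

/-- fixed points of Lion-K with cautious weight decay have zero update. -/
theorem lionk_cwd_fixed_point {d : ℕ} (lam : ℝ) (hlam : 0 < lam) (u x : Fin d → ℝ)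
    (h : ∀ i, u i = lam * (if u i * x i ≤ 0 then (1 : ℝ) else 0) * x i) :
    u = 0 := by
  funext i
  have hi := h i
  by_cases hc : u i * x i ≤ 0
  · simp only [hc, if_pos, mul_one] at hi
    rw [hi] at hc
    have hx : x i = 0 := by
      have h2 : x i * x i = 0 :=
        le_antisymm (by nlinarith) (mul_self_nonneg _)
      exact mul_self_eq_zero.mp h2
    simp [hi, hx]
  · simp only [hc, if_neg, not_false_iff, mul_zero, zero_mul] at hi
    exact absurd (by simp [hi]) hc
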